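/- Let G be a finite simple graph with girth at least 5 and no universal vertex, on n ≥ 4 vertices, with at least one edge. Call an edge {v,w} of G a free edge if {v,w} forms its own connected component of G (both v and w have degree 1 and are adjacent to each other). Let H be the subgraph of G obtained by removing all vertices of degree ≤ 1. Then the collection of 'cut sets' of the complement graph of G — that is, the sets S ⊆ V(G) such that S = ∅ or for every v ∈ S, removing S \ {v} from the complement of G yields strictly fewer connected components than removing S — is exactly: {∅} ∪ { N_{complement of G}(v) : v ∈ V(H) } ∪ { V(G) \ {v,w} : {v,w} a free edge of G }. -/

import Mathlib

open SimpleGraph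

/-- An edge `{v,w}` of `G` is a free edge if it forms its own connected component,
i.e. `v` and `w` are adjacent and each has the other as its unique neighbour. -/
def IsFreeEdge {V : Type*} (G : SimpleGraph V) (v w : V) : Prop :=
  G.Adj v w ∧ G.neighborSet v = {w} ∧ G.neighborSet w = {v}

/-- The number of connected components of `Γ` with the vertex set `S` removed. -/
noncomputable def numComponentsDel {V : Type*} (Γ : SimpleGraph V) (S : Set V) : ℕ :=
  Nat.card (Γ.induce Sᶜ).ConnectedComponent

section Aux
variable {V : Type*}

lemma reachable_prop_inv {Γ : SimpleGraph V} {P : V → Prop}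
    (h : ∀ x y, Γ.Adj x y → (P x ↔ P y)) {x y : V} (hr : Γ.Reachable x y) :
    P x ↔ P y := by
  obtain ⟨w⟩ := hr
  induction w with
  | nil => rfl
  | cons hadj _ ih => exact (h _ _ hadj).trans ih

lemma card_cc_eq_one {Γ : SimpleGraph V} (h : Γ.Connected) :
    Nat.card Γ.ConnectedComponent = 1 := by
  rw [Nat.card_eq_one_iff_unique]
  refine ⟨h.preconnected.subsingleton_connectedComponent, ?_⟩
  obtain ⟨v⟩ := h.nonempty
  exact ⟨Γ.connectedComponentMk v⟩

lemma card_cc_eq_two {Γ : SimpleGraph V} (A : Set V)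
    (hadj : ∀ x y, Γ.Adj x y → (x ∈ A ↔ y ∈ A))
    (hA : ∃ a, a ∈ A) (hB : ∃ b, b ∉ A)
    (hAc : ∀ x y, x ∈ A → y ∈ A → Γ.Reachable x y)
    (hBc : ∀ x y, x ∉ A → y ∉ A → Γ.Reachable x y) :
    Nat.card Γ.ConnectedComponent = 2 := by
  have hinv : ∀ x y, Γ.Reachable x y → ((x ∈ A) = (y ∈ A)) :=
    fun x y hr => propext (reachable_prop_inv hadj hr)
  let f : Γ.ConnectedComponent → Prop := Quot.lift (fun x => x ∈ A) hinv
  have hbij : Function.Bijective f := by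
    constructor
    · refine ConnectedComponent.ind₂ (β := fun c d => f c = f d → c = d) (fun x y hxy => ?_)
      have hxy' : (x ∈ A) = (y ∈ A) := hxy
      by_cases hx : x ∈ A
      · exact ConnectedComponent.sound (hAc _ _ hx (hxy' ▸ hx))
      · exact ConnectedComponent.sound (hBc _ _ hx (fun hy => hx (hxy' ▸ hy)))
    · intro p
      by_cases hp : p
      · obtain ⟨a, ha⟩ := hA
        exact ⟨Γ.connectedComponentMk a, propext (iff_of_true ha hp)⟩
      · obtain ⟨b, hb⟩ := hB
        exact ⟨Γ.connectedComponentMk b, propext (iff_of_false hb hp)⟩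
  rw [Nat.card_eq_of_bijective f hbij, Nat.card_eq_fintype_card, Fintype.card_prop]

lemma exists_not_reachable {Γ : SimpleGraph V} [Finite V]
    (h : 2 ≤ Nat.card Γ.ConnectedComponent) : ∃ x y : V, ¬ Γ.Reachable x y := by
  have : Nontrivial Γ.ConnectedComponent := Finite.one_lt_card_iff_nontrivial.mp h
  obtain ⟨c, d, hcd⟩ := this
  revert hcd
  refine ConnectedComponent.ind₂ (β := fun c d => c ≠ d → ∃ x y : V, ¬ Γ.Reachable x y)
    (fun x y h' => ⟨x, y, fun hr => h' (ConnectedComponent.sound hr)⟩) c d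

/-- All the "two components" computations reduce to this star configuration. -/
lemma count_two {G : SimpleGraph V}
    (noTri : ∀ a b c : V, G.Adj a b → G.Adj b c → G.Adj c a → False)
    (T : Set V) (v : V) (hv : v ∈ T) (hT : ∀ z ∈ T, z ≠ v → G.Adj v z)
    (hne : ∃ b ∈ T, b ≠ v) :
    Nat.card (Gᶜ.induce T).ConnectedComponent = 2 := by
  apply card_cc_eq_two (A := {x : T | (x : V) = v})
  · rintro x y hxy
    have h' : Gᶜ.Adj (x : V) (y : V) := hxy
    simp only [Set.mem_setOf_eq]
    constructor
    · rintro rfl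
      exact absurd (hT _ y.2 ((compl_adj G _ _).mp h').1.symm) ((compl_adj G _ _).mp h').2
    · rintro rfl
      exact absurd ((hT _ x.2 ((compl_adj G _ _).mp h').1).symm)
        (fun h'' => ((compl_adj G _ _).mp h'.symm).2 h''.symm)
  · exact ⟨⟨v, hv⟩, rfl⟩
  · obtain ⟨b, hb, hbv⟩ := hne; exact ⟨⟨b, hb⟩, hbv⟩
  · intro x y hx hy
    have : x = y := Subtype.ext (hx.trans hy.symm)
    exact this ▸ Reachable.refl x
  · intro x y hx hy
    by_cases hxy : x = y
    · exact hxy ▸ Reachable.refl x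
    · have hvals : (x : V) ≠ (y : V) := fun h => hxy (Subtype.ext h)
      have hax : G.Adj v x := hT _ x.2 hx
      have hay : G.Adj v y := hT _ y.2 hy
      have hnadj : ¬ G.Adj (x : V) (y : V) := fun h => noTri v x y hax h hay.symm
      have : (Gᶜ.induce T).Adj x y := (compl_adj G _ _).mpr ⟨hvals, hnadj⟩
      exact this.reachable

lemma connected_of_hub {Γ : SimpleGraph V} (hub : V)
    (hr : ∀ x, Γ.Reachable x hub) : Γ.Connected := by
  haveI : Nonempty V := ⟨hub⟩
  exact ⟨fun x y => (hr x).trans (hr y).symm⟩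

lemma noTri_of_egirth {G : SimpleGraph V} (hg : 5 ≤ G.egirth) :
    ∀ a b c : V, G.Adj a b → G.Adj b c → G.Adj c a → False := by
  intro a b c hab hbc hca
  have hcyc : (Walk.cons hab (Walk.cons hbc (Walk.cons hca Walk.nil))).IsCycle := by
    simp only [Walk.isCycle_def, Walk.isTrail_def, Walk.edges_cons, Walk.edges_nil,
      Walk.support_cons, Walk.support_nil, List.tail_cons]
    refine ⟨?_, by simp, ?_⟩ <;>
      simp [List.nodup_cons, Sym2.eq_iff, hab.ne, hab.ne', hbc.ne, hbc.ne', hca.ne, hca.ne']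
  have h2 := le_egirth.mp hg a _ hcyc
  simp only [Walk.length_cons, Walk.length_nil] at h2
  norm_num at h2

lemma noC4_of_egirth {G : SimpleGraph V} (hg : 5 ≤ G.egirth) :
    ∀ a b c d : V, a ≠ c → b ≠ d → G.Adj a b → G.Adj b c → G.Adj c d → G.Adj d a → False := by
  intro a b c d hac hbd hab hbc hcd hda
  have hcyc : (Walk.cons hab (Walk.cons hbc (Walk.cons hcd (Walk.cons hda Walk.nil)))).IsCycle := by
    simp only [Walk.isCycle_def, Walk.isTrail_def, Walk.edges_cons, Walk.edges_nil,
      Walk.support_cons, Walk.support_nil, List.tail_cons]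
    refine ⟨?_, by simp, ?_⟩ <;>
      simp [List.nodup_cons, Sym2.eq_iff, hab.ne, hab.ne', hbc.ne, hbc.ne', hcd.ne, hcd.ne',
        hda.ne, hda.ne', hac, hac.symm, hbd, hbd.symm]
  have h2 := le_egirth.mp hg a _ hcyc
  simp only [Walk.length_cons, Walk.length_nil] at h2
  norm_num at h2

end Aux

theorem stmt5 {V : Type*} [Fintype V] [DecidableEq V] (G : SimpleGraph V)
    [DecidableRel G.Adj]
    (hgirth : 5 ≤ G.egirth) (hcard : 4 ≤ Fintype.card V)
    (hedge : ∃ v w : V, G.Adj v w)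
    (huniv : ¬ ∃ v : V, ∀ w : V, w ≠ v → G.Adj v w) :
    {S : Set V | S = ∅ ∨ ∀ v ∈ S,
        numComponentsDel Gᶜ (S \ {v}) < numComponentsDel Gᶜ S}
      = {S : Set V | S = ∅
          ∨ (∃ v : V, 2 ≤ G.degree v ∧ S = Gᶜ.neighborSet v)
          ∨ (∃ v w : V, IsFreeEdge G v w ∧ S = ({v, w} : Set V)ᶜ)} := by
  have noTri := noTri_of_egirth hgirth
  have noC4 := noC4_of_egirth hgirth
  have hdiffc : ∀ (X : Set V) (u : V), (X \ {u})ᶜ = Xᶜ ∪ {u} := by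
    intro X u; ext w
    simp only [Set.mem_compl_iff, Set.mem_diff, Set.mem_union, Set.mem_singleton_iff]
    tauto
  ext S
  simp only [Set.mem_setOf_eq]
  constructor
  · intro hL
    by_cases hS : S = ∅
    · exact Or.inl hS
    · obtain ⟨u0, hu0⟩ := Set.nonempty_iff_ne_empty.mpr hS
      have hcut : ∀ u ∈ S, numComponentsDel Gᶜ (S \ {u}) < numComponentsDel Gᶜ S :=
        hL.resolve_left hS
      right
      -- the number of components after removing S is at least 2
      have h1 : 1 ≤ numComponentsDel Gᶜ (S \ {u0}) := by
        have hmem : u0 ∈ (S \ {u0})ᶜ := fun h => h.2 rfl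
        unfold numComponentsDel
        haveI : Nonempty ((Gᶜ.induce (S \ {u0})ᶜ)).ConnectedComponent :=
          ⟨(Gᶜ.induce (S \ {u0})ᶜ).connectedComponentMk ⟨u0, hmem⟩⟩
        exact Nat.card_pos
      have h2 : 2 ≤ numComponentsDel Gᶜ S := by
        have := hcut u0 hu0; omega
      unfold numComponentsDel at h2
      obtain ⟨x, y, hxy⟩ := exists_not_reachable h2
      -- structure of Sᶜ : a dominating vertex v
      have hxyne : x ≠ y := fun h => hxy (h ▸ Reachable.refl x)
      have hyx : ¬ (Gᶜ.induce Sᶜ).Reachable y x := fun h => hxy h.symm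
      have hcross : ∀ z z' : ↥Sᶜ, (Gᶜ.induce Sᶜ).Reachable z x →
          ¬ (Gᶜ.induce Sᶜ).Reachable z' x → G.Adj ↑z ↑z' := by
        intro z z' hz hz'
        have hne : (z : V) ≠ (z' : V) := by
          intro h
          exact hz' ((Subtype.ext h.symm : z' = z) ▸ hz)
        by_contra hnadj
        have hadj : (Gᶜ.induce Sᶜ).Adj z' z := (compl_adj G _ _).mpr ⟨fun h => hne h.symm,
          fun h => hnadj h.symm⟩
        exact hz' (hadj.reachable.trans hz)
      obtain ⟨v, hvmem, hvdom, bb, hbbmem, hbbv⟩ :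
          ∃ v, v ∈ Sᶜ ∧ (∀ w ∈ Sᶜ, w ≠ v → G.Adj v w) ∧ ∃ b, b ∈ Sᶜ ∧ b ≠ v := by
        by_cases hA1 : ∀ z : ↥Sᶜ, (Gᶜ.induce Sᶜ).Reachable z x → z = x
        · refine ⟨↑x, x.2, ?_, ↑y, y.2, fun h => hxyne (Subtype.ext h).symm⟩
          intro w hw hwx
          by_cases hz : (Gᶜ.induce Sᶜ).Reachable ⟨w, hw⟩ x
          · exact absurd (congrArg Subtype.val (hA1 _ hz)) hwx
          · exact hcross x ⟨w, hw⟩ (Reachable.refl x) hz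
        · push_neg at hA1
          obtain ⟨z0, hz0r, hz0x⟩ := hA1
          have hBone : ∀ z' : ↥Sᶜ, ¬ (Gᶜ.induce Sᶜ).Reachable z' x → z' = y := by
            intro z1 hz1
            by_contra hz1y
            exact noC4 ↑x ↑y ↑z0 ↑z1 (fun h => hz0x (Subtype.ext h.symm))
              (fun h => hz1y (Subtype.ext h.symm))
              (hcross x y (Reachable.refl x) hyx)
              (hcross z0 y hz0r hyx).symm
              (hcross z0 z1 hz0r hz1)
              (hcross x z1 (Reachable.refl x) hz1).symm
          refine ⟨↑y, y.2, ?_, ↑x, x.2, fun h => hxyne (Subtype.ext h)⟩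
          intro w hw hwy
          by_cases hz : (Gᶜ.induce Sᶜ).Reachable ⟨w, hw⟩ x
          · exact (hcross ⟨w, hw⟩ y hz hyx).symm
          · exact absurd (congrArg Subtype.val (hBone _ hz)) hwy
      have hcS : numComponentsDel Gᶜ S = 2 := by
        unfold numComponentsDel
        exact count_two noTri Sᶜ v hvmem hvdom ⟨bb, hbbmem, hbbv⟩
      by_cases hB2 : ∃ b1 ∈ Sᶜ, ∃ b2 ∈ Sᶜ, b1 ≠ v ∧ b2 ≠ v ∧ b1 ≠ b2
      · -- S is the complement-neighbourhood of v, degree v ≥ 2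
        left
        obtain ⟨b1, hb1, b2, hb2, hb1v, hb2v, hb12⟩ := hB2
        have hNsub : ∀ u', G.Adj v u' → u' ∈ Sᶜ := by
          intro u' hadj
          by_contra hu'
          have hu'S : u' ∈ S := not_not.mp hu'
          have hlt := hcut u' hu'S
          rw [hcS] at hlt
          have heq : numComponentsDel Gᶜ (S \ {u'}) = 2 := by
            unfold numComponentsDel
            rw [hdiffc S u']
            refine count_two noTri _ v (Or.inl hvmem) ?_ ⟨b1, Or.inl hb1, hb1v⟩
            intro z hz hzv
            rcases hz with hz | hz
            · exact hvdom z hz hzv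
            · rw [Set.mem_singleton_iff] at hz; subst hz; exact hadj
          omega
        have hSc : Sᶜ = {v} ∪ G.neighborSet v := by
          ext w
          constructor
          · intro hw
            by_cases hwv : w = v
            · exact Or.inl hwv
            · exact Or.inr (hvdom w hw hwv)
          · rintro (rfl | hw)
            · exact hvmem
            · exact hNsub w hw
        refine ⟨v, ?_, ?_⟩
        · have : 1 < (G.neighborFinset v).card := Finset.one_lt_card.mpr
            ⟨b1, (mem_neighborFinset G v b1).mpr (hvdom b1 hb1 hb1v),
             b2, (mem_neighborFinset G v b2).mpr (hvdom b2 hb2 hb2v), hb12⟩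
          exact this
        · have hnb : (Gᶜ.neighborSet v)ᶜ = {v} ∪ G.neighborSet v := by
            ext w
            simp only [Set.mem_compl_iff, mem_neighborSet, compl_adj, not_and, not_not,
              Set.mem_union, Set.mem_singleton_iff]
            constructor
            · intro h
              by_cases hwv : w = v
              · exact Or.inl hwv
              · exact Or.inr (h (fun he => hwv he.symm))
            · rintro (rfl | h)
              · intro h'; exact absurd rfl h'
              · intro _; exact h
          calc S = Sᶜᶜ := (compl_compl S).symm
          _ = Gᶜ.neighborSet v := by rw [hSc, ← hnb, compl_compl]
      · -- free edge case
        right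
        push_neg at hB2
        have hadjvb : G.Adj v bb := hvdom bb hbbmem hbbv
        have hScmem : ∀ w ∈ Sᶜ, w = v ∨ w = bb := by
          intro w hw
          by_cases h1 : w = v
          · exact Or.inl h1
          · exact Or.inr (hB2 w hw bb hbbmem h1 hbbv)
        have hkey : ∀ u', u' ∈ S → numComponentsDel Gᶜ (S \ {u'}) = 2 → False := by
          intro u' hu' heq
          have := hcut u' hu'
          rw [hcS, heq] at this
          omega
        have hNv : G.neighborSet v = {bb} := by
          ext u'
          simp only [mem_neighborSet, Set.mem_singleton_iff]
          constructor
          · intro hadj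
            by_contra hub
            have huv : u' ≠ v := fun h => G.loopless.irrefl v (h ▸ hadj)
            have hu'S : u' ∈ S := by
              by_contra h
              rcases hScmem u' h with rfl | rfl
              · exact huv rfl
              · exact hub rfl
            apply hkey u' hu'S
            unfold numComponentsDel
            rw [hdiffc S u']
            refine count_two noTri _ v (Or.inl hvmem) ?_ ⟨bb, Or.inl hbbmem, hbbv⟩
            intro z hz hzv
            rcases hz with hz | hz
            · exact hvdom z hz hzv
            · rw [Set.mem_singleton_iff] at hz; subst hz; exact hadj
          · rintro rfl; exact hadjvb
        have hNb : G.neighborSet bb = {v} := by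
          ext u'
          simp only [mem_neighborSet, Set.mem_singleton_iff]
          constructor
          · intro hadj
            by_contra huv
            have hub : u' ≠ bb := fun h => G.loopless.irrefl bb (h ▸ hadj)
            have hu'S : u' ∈ S := by
              by_contra h
              rcases hScmem u' h with rfl | rfl
              · exact huv rfl
              · exact hub rfl
            apply hkey u' hu'S
            unfold numComponentsDel
            rw [hdiffc S u']
            refine count_two noTri _ bb (Or.inl hbbmem) ?_
              ⟨v, Or.inl hvmem, fun h => hbbv h.symm⟩
            intro z hz hzb
            rcases hz with hz | hz
            · rcases hScmem z hz with rfl | rfl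
              · exact hadjvb.symm
              · exact absurd rfl hzb
            · rw [Set.mem_singleton_iff] at hz; subst hz; exact hadj
          · rintro rfl; exact hadjvb.symm
        refine ⟨v, bb, ⟨hadjvb, hNv, hNb⟩, ?_⟩
        have hSc : Sᶜ = {v, bb} := by
          ext w
          constructor
          · intro hw
            rcases hScmem w hw with rfl | rfl
            · exact Or.inl rfl
            · exact Or.inr rfl
          · rintro (rfl | rfl)
            · exact hvmem
            · exact hbbmem
        rw [← hSc, compl_compl]
  · rintro (rfl | ⟨v, hdeg, rfl⟩ | ⟨v, w, hfree, rfl⟩)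
    · exact Or.inl rfl
    · -- neighbourhood case
      right
      obtain ⟨b1, hb1, b2, hb2, hb12⟩ := Finset.one_lt_card.mp (lt_of_lt_of_le Nat.one_lt_two hdeg)
      rw [mem_neighborFinset] at hb1 hb2
      have hnbc : (Gᶜ.neighborSet v)ᶜ = ({v} ∪ G.neighborSet v : Set V) := by
        ext z
        simp only [Set.mem_compl_iff, mem_neighborSet, compl_adj, not_and, not_not,
          Set.mem_union, Set.mem_singleton_iff]
        constructor
        · intro h
          by_cases hzv : z = v
          · exact Or.inl hzv
          · exact Or.inr (h (fun he => hzv he.symm))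
        · rintro (rfl | h)
          · intro h'; exact absurd rfl h'
          · intro _; exact h
      intro u hu
      obtain ⟨hvu, hnadj⟩ := (compl_adj G v u).mp hu
      have hc2 : numComponentsDel Gᶜ (Gᶜ.neighborSet v) = 2 := by
        unfold numComponentsDel
        rw [hnbc]
        refine count_two noTri _ v (Or.inl rfl) ?_ ⟨b1, Or.inr hb1, hb1.ne'⟩
        intro z hz hzv
        rcases hz with hz | hz
        · rw [Set.mem_singleton_iff] at hz; exact absurd hz hzv
        · exact hz
      have hb0 : ∃ b0, G.Adj v b0 ∧ ¬ G.Adj u b0 := by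
        by_cases h : G.Adj u b1
        · refine ⟨b2, hb2, fun h2 => ?_⟩
          exact noC4 u b1 v b2 (fun he => hvu he.symm) hb12 h hb1.symm hb2 h2.symm
        · exact ⟨b1, hb1, h⟩
      obtain ⟨b0, hvb0, hub0⟩ := hb0
      have hc1 : numComponentsDel Gᶜ (Gᶜ.neighborSet v \ {u}) = 1 := by
        unfold numComponentsDel
        rw [hdiffc _ u, hnbc]
        apply card_cc_eq_one
        have memv : v ∈ (({v} ∪ G.neighborSet v : Set V) ∪ {u}) := Or.inl (Or.inl rfl)
        have memu : u ∈ (({v} ∪ G.neighborSet v : Set V) ∪ {u}) := Or.inr rfl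
        have memb0 : b0 ∈ (({v} ∪ G.neighborSet v : Set V) ∪ {u}) := Or.inl (Or.inr hvb0)
        apply connected_of_hub ⟨v, memv⟩
        intro z
        have hadjuv : (Gᶜ.induce _).Adj ⟨u, memu⟩ ⟨v, memv⟩ :=
          (compl_adj G u v).mpr ⟨fun h => hvu h.symm, fun h => hnadj h.symm⟩
        have hadjub0 : (Gᶜ.induce _).Adj ⟨u, memu⟩ ⟨b0, memb0⟩ :=
          (compl_adj G u b0).mpr ⟨fun h => hnadj (h ▸ hvb0), hub0⟩
        obtain hz := z.2
        rcases hz with (hz | hz) | hz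
        · rw [Set.mem_singleton_iff] at hz
          exact (Subtype.ext hz : z = ⟨v, memv⟩) ▸ Reachable.refl _
        · have hzb0 : (Gᶜ.induce _).Reachable z ⟨b0, memb0⟩ := by
            by_cases hze : (z : V) = b0
            · exact (Subtype.ext hze : z = ⟨b0, memb0⟩) ▸ Reachable.refl _
            · exact Adj.reachable ((compl_adj G _ _).mpr
                ⟨hze, fun h => noTri v z b0 hz h hvb0.symm⟩)
          exact hzb0.trans (hadjub0.symm.reachable.trans hadjuv.reachable)
        · rw [Set.mem_singleton_iff] at hz
          exact (Subtype.ext hz : z = ⟨u, memu⟩) ▸ hadjuv.reachable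
      rw [hc1, hc2]
      norm_num
    · -- free edge case
      right
      obtain ⟨hadjvw, hNv, hNw⟩ := hfree
      have hvw : v ≠ w := hadjvw.ne
      intro u hu
      have huv : u ≠ v := by
        intro h; subst h
        exact hu (Or.inl rfl)
      have huw : u ≠ w := by
        intro h; subst h
        exact hu (Or.inr rfl)
      have hnadjv : ¬ G.Adj v u := by
        intro h
        have : u ∈ G.neighborSet v := h
        rw [hNv] at this
        exact huw this
      have hnadjw : ¬ G.Adj w u := by
        intro h
        have : u ∈ G.neighborSet w := h
        rw [hNw] at this
        exact huv this
      have hc2 : numComponentsDel Gᶜ (({v, w} : Set V)ᶜ) = 2 := by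
        unfold numComponentsDel
        rw [compl_compl]
        refine count_two noTri _ v (Or.inl rfl) ?_ ⟨w, Or.inr rfl, hvw.symm⟩
        intro z hz hzv
        rcases hz with rfl | hz
        · exact absurd rfl hzv
        · rw [Set.mem_singleton_iff] at hz; subst hz; exact hadjvw
      have hc1 : numComponentsDel Gᶜ (({v, w} : Set V)ᶜ \ {u}) = 1 := by
        unfold numComponentsDel
        rw [hdiffc _ u, compl_compl]
        apply card_cc_eq_one
        have memv : v ∈ (({v, w} : Set V) ∪ {u}) := Or.inl (Or.inl rfl)
        have memw : w ∈ (({v, w} : Set V) ∪ {u}) := Or.inl (Or.inr rfl)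
        have memu : u ∈ (({v, w} : Set V) ∪ {u}) := Or.inr rfl
        apply connected_of_hub ⟨u, memu⟩
        intro z
        have hadjvu : (Gᶜ.induce _).Adj ⟨v, memv⟩ ⟨u, memu⟩ :=
          (compl_adj G v u).mpr ⟨fun h => huv h.symm, hnadjv⟩
        have hadjwu : (Gᶜ.induce _).Adj ⟨w, memw⟩ ⟨u, memu⟩ :=
          (compl_adj G w u).mpr ⟨fun h => huw h.symm, hnadjw⟩
        obtain hz := z.2
        rcases hz with (hz | hz) | hz
        · exact (Subtype.ext hz : z = ⟨v, memv⟩) ▸ hadjvu.reachable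
        · rw [Set.mem_singleton_iff] at hz
          exact (Subtype.ext hz : z = ⟨w, memw⟩) ▸ hadjwu.reachable
        · rw [Set.mem_singleton_iff] at hz
          exact (Subtype.ext hz : z = ⟨u, memu⟩) ▸ Reachable.refl _
      rw [hc1, hc2]
      norm_num
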